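/- Define Φ_{η,c}(r) = r⁻¹ for 0 < r ≤ e^c and Φ_{η,c}(r) = (log r)^{−η} for r > e^c, where 0 < η < 1/4 and c > 0. Suppose positive reals X, C, A satisfy X ≤ e^{cs}·C + s^{−η}·A for all s ≥ 1, and A > 0, C > 0. Then there is a constant κ > 0 depending only on η and c (not on X, C, A) such that X ≤ κ · Φ_{η,c}(A/C) · A. -/

import Mathlib

/-- `Φ_{η,c}(r) = r⁻¹` on `(0, e^c]` and `(log r)^{−η}` on `(e^c, ∞)`. -/
noncomputable def Phi (η c r : ℝ) : ℝ :=
  if r ≤ Real.exp c then r⁻¹ else (Real.log r) ^ (-η)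

set_option maxHeartbeats 1000000 in
/-- Minimization over `s ≥ 1` of the interpolation inequality
`X ≤ e^{cs}C + s^{−η}A` yields `X ≤ κ · Φ_{η,c}(A/C) · A`. -/
theorem log_stability_from_interpolation
    (η c : ℝ) (hη₀ : 0 < η) (hη₁ : η < 1 / 4) (hc : 0 < c) :
    ∃ κ > 0, ∀ X C A : ℝ, 0 < X → 0 < C → 0 < A →
      (∀ s : ℝ, 1 ≤ s → X ≤ Real.exp (c * s) * C + s ^ (-η) * A) →
      X ≤ κ * Phi η c (A / C) * A := by
  have h2c : (0:ℝ) < 2 * c := by linarith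
  have hD : (0:ℝ) < (2*c) ^ η := Real.rpow_pos_of_pos h2c η
  refine ⟨2 * Real.exp c + 2 * (2*c)^η + 2, by positivity, ?_⟩
  intro X C A hX hC hA hineq
  have hr : 0 < A / C := div_pos hA hC
  unfold Phi
  split_ifs with h
  · -- case A/C ≤ exp c : use s = 1
    have hA' : A ≤ Real.exp c * C := by
      rw [div_le_iff₀ hC] at h; linarith
    have h1 := hineq 1 le_rfl
    rw [mul_one, Real.one_rpow, one_mul] at h1
    have hinv : (A / C)⁻¹ * A = C := by field_simp
    calc X ≤ Real.exp c * C + A := h1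
      _ ≤ (2 * Real.exp c + 2 * (2*c)^η + 2) * C := by nlinarith [Real.exp_pos c]
      _ = (2 * Real.exp c + 2 * (2*c)^η + 2) * ((A/C)⁻¹ * A) := by rw [hinv]
      _ = (2 * Real.exp c + 2 * (2*c)^η + 2) * (A/C)⁻¹ * A := by ring
  · push_neg at h
    have hlog : c < Real.log (A/C) := (Real.lt_log_iff_exp_lt hr).mpr h
    set L := Real.log (A/C) with hLdef
    have hLpos : 0 < L := hc.trans hlog
    have hLη : 0 < L ^ η := Real.rpow_pos_of_pos hLpos η
    have hLneg : L ^ (-η) = (L ^ η)⁻¹ := by rw [Real.rpow_neg hLpos.le]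
    by_cases h2 : L ≤ 2 * c
    · -- intermediate case: use s = 1 again
      have h1 := hineq 1 le_rfl
      rw [mul_one, Real.one_rpow, one_mul] at h1
      have hCA : Real.exp c * C ≤ A := by
        rw [lt_div_iff₀ hC] at h; linarith
      have hmono : L ^ η ≤ (2*c) ^ η :=
        Real.rpow_le_rpow hLpos.le h2 hη₀.le
      have hinvmono : ((2*c)^η)⁻¹ ≤ (L^η)⁻¹ := by
        exact inv_anti₀ hLη hmono
      have e1 : (2*c)^η * ((2*c)^η)⁻¹ = 1 := mul_inv_cancel₀ hD.ne'
      have key : 2 ≤ (2 * Real.exp c + 2 * (2*c)^η + 2) * L ^ (-η) := by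
        rw [hLneg]
        nlinarith [Real.exp_pos c, inv_pos.mpr hLη, inv_pos.mpr hD]
      have hXA : X ≤ 2 * A := by linarith
      nlinarith [mul_le_mul_of_nonneg_right key hA.le]
    · -- main case: use s = L / (2c)
      push_neg at h2
      set s := L / (2*c) with hsdef
      have hs : 1 ≤ s := by
        rw [hsdef, le_div_iff₀ h2c]; linarith
      have hspos : 0 < s := lt_of_lt_of_le one_pos hs
      have h1 := hineq s hs
      have hcs : c * s = L / 2 := by
        rw [hsdef]; field_simp
      rw [hcs] at h1
      set E := Real.exp (L/2) with hEdef
      have hEpos : 0 < E := Real.exp_pos _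
      have hE2 : E * E = A / C := by
        rw [hEdef, ← Real.exp_add]
        rw [show L/2 + L/2 = L by ring, hLdef, Real.exp_log hr]
      have hEC : E * C = A / E := by
        rw [eq_div_iff hEpos.ne']
        calc E * C * E = (E * E) * C := by ring
          _ = (A / C) * C := by rw [hE2]
          _ = A := by field_simp
      have hsrpow : s ^ (-η) = (2*c)^η * (L^η)⁻¹ := by
        rw [Real.rpow_neg hspos.le, hsdef, Real.div_rpow hLpos.le h2c.le,
          inv_div, div_eq_mul_inv]
      -- bound L^η ≤ 2E
      have hlog2 : L/2 + 1 ≤ E := by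
        rw [hEdef]; exact Real.add_one_le_exp (L/2)
      have hbound : L ^ η ≤ 1 + L := by
        rcases le_total L 1 with hL1 | hL1
        · have := Real.rpow_le_one hLpos.le hL1 hη₀.le; linarith
        · have := Real.rpow_le_rpow_of_exponent_le hL1 (by linarith : η ≤ 1)
          rw [Real.rpow_one] at this; linarith
      have hLE : L ^ η ≤ 2 * E := by linarith
      have hAE : A / E ≤ 2 * (L^η)⁻¹ * A := by
        rw [div_le_iff₀ hEpos]
        have h1' : 1 ≤ 2 * (L^η)⁻¹ * E := by
          have hm := mul_le_mul_of_nonneg_left hLE (inv_nonneg.mpr hLη.le)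
          rw [inv_mul_cancel₀ hLη.ne'] at hm
          nlinarith
        nlinarith [mul_le_mul_of_nonneg_left h1' hA.le]
      have hfinal : X ≤ (2 + (2*c)^η) * (L^η)⁻¹ * A := by
        calc X ≤ E * C + s ^ (-η) * A := h1
          _ = A / E + (2*c)^η * (L^η)⁻¹ * A := by rw [hEC, hsrpow]
          _ ≤ 2 * (L^η)⁻¹ * A + (2*c)^η * (L^η)⁻¹ * A := by linarith
          _ = (2 + (2*c)^η) * (L^η)⁻¹ * A := by ring
      rw [hLneg]
      have hκ : (2 + (2*c)^η) ≤ 2 * Real.exp c + 2 * (2*c)^η + 2 := by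
        nlinarith [Real.exp_pos c]
      calc X ≤ (2 + (2*c)^η) * (L^η)⁻¹ * A := hfinal
        _ ≤ (2 * Real.exp c + 2 * (2*c)^η + 2) * (L^η)⁻¹ * A := by
            exact mul_le_mul_of_nonneg_right
              (mul_le_mul_of_nonneg_right hκ (inv_pos.mpr hLη).le) hA.le
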